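/- Let R be Rado's poset. Then: (a) for every integer m, the set ⋃AM_m(R) of elements of R belonging to some m-element maximal antichain, with the order induced from R, is better-quasi-ordered; (b) R order-embeds into AM(R), the set of maximal antichains of R ordered by domination. -/

import Mathlib

open Set

/-- `s` is an initial segment of the finite set `t` (w.r.t. increasing enumerations). -/
def InitSeg (s t : Finset ℕ) : Prop :=
  s ⊆ t ∧ ∀ x ∈ s, ∀ y ∈ t, y ∉ s → x < y

/-- `s` is an initial segment of the set `X ⊆ ℕ`. -/
def InitSegSet (s : Finset ℕ) (X : Set ℕ) : Prop :=
  ↑s ⊆ X ∧ ∀ x ∈ s, ∀ y ∈ X, y ∉ s → x < y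

/-- The union of a family of finite subsets of `ℕ`. -/
def unionOf (B : Set (Finset ℕ)) : Set ℕ := ⋃ s ∈ B, (s : Set ℕ)

/-- `B` is a block: `B` is infinite and every infinite subset of `⋃ B` has a nonempty
initial segment belonging to `B`. -/
def IsBlock (B : Set (Finset ℕ)) : Prop :=
  B.Infinite ∧ ∀ X : Set ℕ, X ⊆ unionOf B → X.Infinite →
    ∃ s ∈ B, s.Nonempty ∧ InitSegSet s X

/-- `B` is a barrier: a block no member of which is a proper subset of another member. -/
def IsBarrier (B : Set (Finset ℕ)) : Prop :=
  IsBlock B ∧ ∀ s ∈ B, ∀ t ∈ B, s ⊆ t → s = t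

/-- `B` is a thin block: a block which is an antichain under the initial-segment order. -/
def IsThinBlock (B : Set (Finset ℕ)) : Prop :=
  IsBlock B ∧ ∀ s ∈ B, ∀ t ∈ B, InitSeg s t → s = t

/-- `s ◁ t`: there is `r` such that `s` is a proper initial segment of `r` and `t` is
obtained from `r` by removing its least element. -/
def Tri (s t : Finset ℕ) : Prop :=
  ∃ r : Finset ℕ, InitSeg s r ∧ s ≠ r ∧ ∃ a ∈ r, (∀ b ∈ r, a ≤ b) ∧ t = r.erase a

/-- The map `f` is good on `B` w.r.t. the quasi-order `le`. -/
def GoodPair {Q : Type*} (le : Q → Q → Prop) (B : Set (Finset ℕ)) (f : Finset ℕ → Q) : Prop :=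
  ∃ s ∈ B, ∃ t ∈ B, Tri s t ∧ le (f s) (f t)

/-- A quasi-order is better-quasi-ordered if every map from every barrier into it is good. -/
def IsBqo {Q : Type*} (le : Q → Q → Prop) : Prop :=
  ∀ B : Set (Finset ℕ), IsBarrier B → ∀ f : Finset ℕ → Q, GoodPair le B f

/-- A quasi-order is well-quasi-ordered if it has no infinite strictly descending sequence
and no infinite antichain. -/
def IsWqo {Q : Type*} (le : Q → Q → Prop) : Prop :=
  (¬ ∃ f : ℕ → Q, ∀ n, le (f (n + 1)) (f n) ∧ ¬ le (f n) (f (n + 1))) ∧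
    ¬ ∃ f : ℕ → Q, ∀ m n : ℕ, m ≠ n → ¬ le (f m) (f n)

/-- The strict lexicographic order on finite subsets of `ℕ` (via increasing enumerations;
a proper initial segment is lexicographically smaller). -/
def lexLT (s t : Finset ℕ) : Prop :=
  List.Lex (· < ·) (s.sort (· ≤ ·)) (t.sort (· ≤ ·))

/-- The order type of `B` under the lexicographic order is at most `α`: there is a
map of `B` into the ordinals `< α` which is strictly increasing w.r.t. `lexLT`. -/
def TypeLE (B : Set (Finset ℕ)) (α : Ordinal) : Prop :=
  ∃ g : Finset ℕ → Ordinal, (∀ s ∈ B, g s < α) ∧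
    ∀ s ∈ B, ∀ t ∈ B, lexLT s t → g s < g t

/-- A quasi-order is `α`-better-quasi-ordered if every map from a barrier of order type
at most `α` into it is good. -/
def IsAlphaBqo (α : Ordinal) {Q : Type*} (le : Q → Q → Prop) : Prop :=
  ∀ B : Set (Finset ℕ), IsBarrier B → TypeLE B α →
    ∀ f : Finset ℕ → Q, GoodPair le B f

/-- Domination quasi-order on subsets of a quasi-ordered set. -/
def DomRel {Q : Type*} (le : Q → Q → Prop) (A B : Set Q) : Prop :=
  ∀ a ∈ A, ∃ b ∈ B, le a b

/-- `I` is an ideal: nonempty, downward closed and up-directed. -/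
def IsIdealRel {Q : Type*} (le : Q → Q → Prop) (I : Set Q) : Prop :=
  I.Nonempty ∧ (∀ x y, le x y → y ∈ I → x ∈ I) ∧
    ∀ x ∈ I, ∀ y ∈ I, ∃ z ∈ I, le x z ∧ le y z

/-- `I` is principal: it has a greatest element. -/
def IsPrincipalRel {Q : Type*} (le : Q → Q → Prop) (I : Set Q) : Prop :=
  ∃ a ∈ I, ∀ x ∈ I, le x a

/-- A maximal antichain: an antichain not properly contained in any other antichain. -/
def IsMaxAntichainRel {Q : Type*} (le : Q → Q → Prop) (A : Set Q) : Prop :=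
  IsAntichain le A ∧ ∀ B : Set Q, IsAntichain le B → A ⊆ B → A = B

/-- An interval order: no `a < b`, `c < d` with each of `a, b` incomparable to each
of `c, d`. -/
def IsIntervalOrder (P : Type*) [Preorder P] : Prop :=
  ¬ ∃ a b c d : P, a < b ∧ c < d ∧
    ¬ a ≤ c ∧ ¬ c ≤ a ∧ ¬ a ≤ d ∧ ¬ d ≤ a ∧
    ¬ b ≤ c ∧ ¬ c ≤ b ∧ ¬ b ≤ d ∧ ¬ d ≤ b

/-- `a ≤_pred b` iff every strict predecessor of `a` is a strict predecessor of `b`. -/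
def predLE {P : Type*} [PartialOrder P] (a b : P) : Prop := ∀ x, x < a → x < b

/-- `a ≤_succ b` iff every strict successor of `b` is a strict successor of `a`. -/
def succLE {P : Type*} [PartialOrder P] (a b : P) : Prop := ∀ y, b < y → a < y

/-- `a ≤_crit b` iff `a ≤_pred b` and `a ≤_succ b`. -/
def critLE {P : Type*} [PartialOrder P] (a b : P) : Prop := predLE a b ∧ succLE a b

/-- The carrier of Rado's poset: pairs `(m, n)` of naturals with `m < n`. -/
def Rado := {p : ℕ × ℕ // p.1 < p.2}

/-- The order of Rado's poset: `(m, n) ≤ (m', n')` iff `m = m'` and `n ≤ n'`, or `n < m'`. -/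
def radoLE (u v : Rado) : Prop :=
  (u.1.1 = v.1.1 ∧ u.1.2 ≤ v.1.2) ∨ u.1.2 < v.1.1
-- Section A : basic barrier tools
lemma initsegset_comp {s t : Finset ℕ} {X : Set ℕ} (hs : InitSegSet s X)
    (ht : InitSegSet t X) : s ⊆ t ∨ t ⊆ s := by
  by_contra h
  push_neg at h
  obtain ⟨h1, h2⟩ := h
  obtain ⟨x, hxs, hxt⟩ := Finset.not_subset.1 h1
  obtain ⟨y, hyt, hys⟩ := Finset.not_subset.1 h2
  have := hs.2 x hxs y (ht.1 hyt) hys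
  have := ht.2 y hyt x (hs.1 hxs) hxt
  omega

lemma mem_barrier_nonempty {B : Set (Finset ℕ)} (hB : IsBarrier B) {s : Finset ℕ}
    (hs : s ∈ B) : s.Nonempty := by
  rcases s.eq_empty_or_nonempty with rfl | h
  · exfalso
    have hsub : B ⊆ {∅} := fun t ht => (hB.2 ∅ hs t ht (Finset.empty_subset t)).symm
    exact hB.1.1 ((Set.finite_singleton _).subset hsub)
  · exact h

lemma subset_unionOf {B : Set (Finset ℕ)} {s : Finset ℕ} (hs : s ∈ B) :
    (↑s : Set ℕ) ⊆ unionOf B := fun x hx =>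
  Set.mem_biUnion hs hx

lemma unionOf_infinite {B : Set (Finset ℕ)} (hB : IsBarrier B) : (unionOf B).Infinite := by
  intro hU
  apply hB.1.1
  have hsub : B ⊆ ↑(hU.toFinset.powerset) := by
    intro s hs
    simp only [Finset.coe_powerset, Set.mem_setOf_eq, Finset.mem_coe, Finset.mem_powerset]
    intro x hx
    exact hU.mem_toFinset.2 (subset_unionOf hs hx)
  exact (hU.toFinset.powerset.finite_toSet).subset hsub

open Classical in
noncomputable def sigB (B : Set (Finset ℕ)) (X : Set ℕ) : Finset ℕ :=
  if h : ∃ s ∈ B, s.Nonempty ∧ InitSegSet s X then h.choose else ∅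

lemma sigB_spec {B : Set (Finset ℕ)} (hB : IsBlock B) {X : Set ℕ} (hXU : X ⊆ unionOf B)
    (hXi : X.Infinite) : sigB B X ∈ B ∧ (sigB B X).Nonempty ∧ InitSegSet (sigB B X) X := by
  have h : ∃ s ∈ B, s.Nonempty ∧ InitSegSet s X := hB.2 X hXU hXi
  rw [sigB]
  rw [dif_pos h]
  exact ⟨h.choose_spec.1, h.choose_spec.2⟩

lemma sigB_eq_of_initsegset {B : Set (Finset ℕ)} (hB : IsBarrier B) {X : Set ℕ}
    (hXU : X ⊆ unionOf B) (hXi : X.Infinite) {s : Finset ℕ} (hs : s ∈ B)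
    (hseg : InitSegSet s X) : sigB B X = s := by
  obtain ⟨h1, _, h3⟩ := sigB_spec hB.1 hXU hXi
  rcases initsegset_comp h3 hseg with h | h
  · exact hB.2 _ h1 _ hs h
  · exact (hB.2 _ hs _ h1 h).symm

lemma inter_Ioi_infinite {Y : Set ℕ} (hY : Y.Infinite) (n : ℕ) : (Y ∩ Set.Ioi n).Infinite := by
  intro hfin
  apply hY
  have : Y ⊆ (Y ∩ Set.Ioi n) ∪ Set.Iic n := by
    intro y hy
    by_cases h : n < y
    · exact Or.inl ⟨hy, h⟩
    · exact Or.inr (Set.mem_Iic.2 (by omega))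
  exact ((hfin.union (Set.finite_Iic n)).subset this)
-- Section B : the ◁-step inside a barrier, and descent chains
lemma tri_step {C : Set (Finset ℕ)} (hC : IsBarrier C) {s : Finset ℕ} (hs : s ∈ C) :
    ∃ t ∈ C, Tri s t := by
  have hne : s.Nonempty := mem_barrier_nonempty hC hs
  set U := unionOf C with hUdef
  have hUi : U.Infinite := unionOf_infinite hC
  set a := s.min' hne with ha
  have hamem : a ∈ s := s.min'_mem hne
  set Z := U ∩ Set.Ioi (s.max' hne) with hZ
  have hZi : Z.Infinite := inter_Ioi_infinite hUi _
  have hZU : Z ⊆ U := Set.inter_subset_left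
  have hZgt : ∀ z ∈ Z, ∀ x ∈ s, x < z := fun z hz x hx =>
    lt_of_le_of_lt (s.le_max' x hx) hz.2
  set Y : Set ℕ := ↑(s.erase a) ∪ Z with hY
  have hYU : Y ⊆ U := by
    intro y hy
    rcases hy with hy | hy
    · exact subset_unionOf hs (s.erase_subset a hy)
    · exact hZU hy
  have hYi : Y.Infinite := hZi.mono Set.subset_union_right
  obtain ⟨ht, htne, htseg⟩ := sigB_spec hC.1 hYU hYi
  set t := sigB C Y with htdef
  have haY : a ∉ Y := by
    intro h
    rcases h with h | h
    · exact (Finset.notMem_erase a s) (by exact_mod_cast h)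
    · exact absurd (s.le_max' a hamem) (not_le.2 h.2)
  have hat : a ∉ t := fun h => haY (htseg.1 h)
  set W : Set ℕ := ↑s ∪ Z with hW
  have hWY : W = {a} ∪ Y := by
    ext x
    simp only [hW, hY, Set.mem_union, Finset.mem_coe, Finset.mem_erase,
      Set.mem_singleton_iff]
    constructor
    · rintro (hx | hx)
      · by_cases hxa : x = a
        · exact Or.inl hxa
        · exact Or.inr (Or.inl ⟨hxa, hx⟩)
      · exact Or.inr (Or.inr hx)
    · rintro (rfl | ⟨_, hx⟩ | hx)
      · exact Or.inl hamem
      · exact Or.inl hx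
      · exact Or.inr hx
  have hsW : InitSegSet s W := by
    refine ⟨Set.subset_union_left, fun x hx y hy hys => ?_⟩
    rcases hy with hy | hy
    · exact absurd hy hys
    · exact hZgt y hy x hx
  have hrW : InitSegSet (insert a t) W := by
    constructor
    · intro x hx
      rw [hWY]
      rcases Finset.mem_insert.1 (by exact_mod_cast hx) with rfl | hx'
      · exact Or.inl rfl
      · exact Or.inr (htseg.1 hx')
    · intro x hx y hy hyr
      have hya : y ≠ a := fun h => hyr (by rw [h]; exact Finset.mem_insert_self a t)
      have hyY : y ∈ Y := by
        rw [hWY] at hy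
        rcases hy with hy | hy
        · exact absurd hy hya
        · exact hy
      have hyt : y ∉ t := fun h => hyr (Finset.mem_insert_of_mem h)
      rcases Finset.mem_insert.1 hx with rfl | hx'
      · rcases hyY with hy' | hy'
        · have : y ∈ s := Finset.mem_of_mem_erase (by exact_mod_cast hy')
          have := s.min'_le y this
          have hne' : y ≠ a := (Finset.mem_erase.1 (by exact_mod_cast hy')).1
          omega
        · exact lt_of_le_of_lt (s.le_max' a hamem) hy'.2
      · exact htseg.2 x hx' y hyY hyt
  rcases initsegset_comp hrW hsW with hsub | hsub
  · exfalso
    have hts : t ⊆ s := fun x hx => hsub (Finset.mem_insert_of_mem hx)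
    have := hC.2 t ht s hs hts
    exact hat (this ▸ hamem)
  · have hne2 : s ≠ insert a t := by
      intro h
      have : t = s.erase a := by
        rw [h, Finset.erase_insert hat]
      have hts : t ⊆ s := this ▸ s.erase_subset a
      have := hC.2 t ht s hs hts
      exact hat (this ▸ hamem)
    refine ⟨t, ht, insert a t, ⟨hsub, ?_⟩, hne2, a, Finset.mem_insert_self a t, ?_, ?_⟩
    · intro x hx y hy hys
      exact hsW.2 x hx y (hrW.1 hy) hys
    · intro b hb
      rcases Finset.mem_insert.1 hb with rfl | hb'
      · exact le_refl a
      · rcases htseg.1 hb' with hb'' | hb''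
        · exact s.min'_le b (Finset.mem_of_mem_erase (by exact_mod_cast hb''))
        · exact le_of_lt (lt_of_le_of_lt (s.le_max' a hamem) hb''.2)
    · exact (Finset.erase_insert hat).symm

lemma barrier_descent {C : Set (Finset ℕ)} (hC : IsBarrier C) :
    ∃ sq : ℕ → Finset ℕ, (∀ n, sq n ∈ C) ∧ ∀ n, Tri (sq n) (sq (n + 1)) := by
  have hstep : ∀ s : Finset ℕ, s ∈ C → ∃ t, t ∈ C ∧ Tri s t := by
    intro s hs
    obtain ⟨t, ht, htri⟩ := tri_step hC hs
    exact ⟨t, ht, htri⟩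
  choose F hF1 hF2 using hstep
  obtain ⟨s0, hs0⟩ := hC.1.1.nonempty
  let sq' : ℕ → {s : Finset ℕ // s ∈ C} := fun n =>
    Nat.rec ⟨s0, hs0⟩ (fun _ p => ⟨F p.1 p.2, hF1 _ _⟩) n
  exact ⟨fun n => (sq' n).1, fun n => (sq' n).2, fun n => hF2 (sq' n).1 (sq' n).2⟩
-- Section C : combinatorial forcing infrastructure
def Accepts (B B1 : Set (Finset ℕ)) (s : Finset ℕ) (Y : Set ℕ) : Prop :=
  ∀ Z : Set ℕ, Z ⊆ Y → Z.Infinite → (∀ z ∈ Z, ∀ x ∈ s, x < z) → sigB B (↑s ∪ Z) ∈ B1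

def Rejects (B B1 : Set (Finset ℕ)) (s : Finset ℕ) (Y : Set ℕ) : Prop :=
  ∀ Z : Set ℕ, Z ⊆ Y → Z.Infinite → ¬ Accepts B B1 s Z

def tailIn (X : Set ℕ) (s : Finset ℕ) : Set ℕ := {y ∈ X | ∀ x ∈ s, x < y}

lemma accepts_mono {B B1 : Set (Finset ℕ)} {s : Finset ℕ} {Y Y' : Set ℕ} (h : Y' ⊆ Y)
    (ha : Accepts B B1 s Y) : Accepts B B1 s Y' :=
  fun Z hZ => ha Z (hZ.trans h)

lemma rejects_mono {B B1 : Set (Finset ℕ)} {s : Finset ℕ} {Y Y' : Set ℕ} (h : Y' ⊆ Y)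
    (ha : Rejects B B1 s Y) : Rejects B B1 s Y' :=
  fun Z hZ => ha Z (hZ.trans h)

lemma exists_decide (B B1 : Set (Finset ℕ)) (s : Finset ℕ) (Y : Set ℕ) (hYi : Y.Infinite) :
    ∃ Y', Y' ⊆ Y ∧ Y'.Infinite ∧ (Accepts B B1 s Y' ∨ Rejects B B1 s Y') := by
  by_cases h : Rejects B B1 s Y
  · exact ⟨Y, Set.Subset.rfl, hYi, Or.inr h⟩
  · simp only [Rejects, not_forall] at h
    obtain ⟨Z, hZY, hZi, hacc⟩ := h
    rw [not_not] at hacc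
    exact ⟨Z, hZY, hZi, Or.inl hacc⟩

lemma exists_decideAll (B B1 : Set (Finset ℕ)) (S : Finset (Finset ℕ)) :
    ∀ Y : Set ℕ, Y.Infinite →
      ∃ Y', Y' ⊆ Y ∧ Y'.Infinite ∧ ∀ s ∈ S, Accepts B B1 s Y' ∨ Rejects B B1 s Y' := by
  induction S using Finset.induction_on with
  | empty => exact fun Y hYi => ⟨Y, Set.Subset.rfl, hYi, by simp⟩
  | insert _ _ hnotmem ih =>
    rename_i a S
    intro Y hYi
    obtain ⟨Y1, hY1, hY1i, hY1d⟩ := ih Y hYi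
    obtain ⟨Y2, hY2, hY2i, hY2d⟩ := exists_decide B B1 a Y1 hY1i
    refine ⟨Y2, hY2.trans hY1, hY2i, fun s hs => ?_⟩
    rcases Finset.mem_insert.1 hs with rfl | hs'
    · exact hY2d
    · rcases hY1d s hs' with h | h
      · exact Or.inl (accepts_mono hY2 h)
      · exact Or.inr (rejects_mono hY2 h)

lemma accepts_of_mem {B B1 : Set (Finset ℕ)} (hB : IsBarrier B) {s : Finset ℕ}
    (hsB : s ∈ B) (hsB1 : s ∈ B1) {Y : Set ℕ} (hYU : Y ⊆ unionOf B) :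
    Accepts B B1 s Y := by
  intro Z hZY hZi hgt
  have hsub : (↑s ∪ Z : Set ℕ) ⊆ unionOf B :=
    Set.union_subset (subset_unionOf hsB) (hZY.trans hYU)
  have hinf : (↑s ∪ Z : Set ℕ).Infinite := hZi.mono Set.subset_union_right
  have hseg : InitSegSet s (↑s ∪ Z) := by
    refine ⟨Set.subset_union_left, fun x hx y hy hys => ?_⟩
    rcases hy with hy | hy
    · exact absurd hy hys
    · exact hgt y hy x hx
  rw [sigB_eq_of_initsegset hB hsub hinf hsB hseg]
  exact hsB1

lemma tailIn_subset (X : Set ℕ) (s : Finset ℕ) : tailIn X s ⊆ X := fun _ h => h.1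

lemma tailIn_infinite {X : Set ℕ} (hXi : X.Infinite) (s : Finset ℕ) : (tailIn X s).Infinite := by
  apply (inter_Ioi_infinite hXi (s.sup id)).mono
  rintro y ⟨hyX, hy⟩
  exact ⟨hyX, fun x hx => lt_of_le_of_lt (Finset.le_sup (f := id) hx) hy⟩

lemma tailIn_anti {X : Set ℕ} {s t : Finset ℕ} (h : s ⊆ t) : tailIn X t ⊆ tailIn X s :=
  fun y hy => ⟨hy.1, fun x hx => hy.2 x (h hx)⟩

lemma infinite_of_unbounded {C : Set (Finset ℕ)}
    (h : ∀ N : ℕ, ∃ s ∈ C, s.Nonempty ∧ ∀ x ∈ s, N < x) : C.Infinite := by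
  intro hfin
  set M := hfin.toFinset.sup (fun s => s.sup id) with hM
  obtain ⟨s, hsC, ⟨x, hx⟩, hgt⟩ := h M
  have h1 : x ≤ s.sup id := Finset.le_sup (f := id) hx
  have h2 : s.sup id ≤ M := Finset.le_sup (f := fun s => s.sup id) (hfin.mem_toFinset.2 hsC)
  exact absurd (hgt x hx) (by omega)

lemma barrier_restrict {B : Set (Finset ℕ)} (hB : IsBarrier B) {X : Set ℕ}
    (hXU : X ⊆ unionOf B) (hXi : X.Infinite) (P : Finset ℕ → Prop)
    (hP : ∀ W : Set ℕ, W ⊆ X → W.Infinite → P (sigB B W)) :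
    IsBarrier {s | s ∈ B ∧ P s ∧ ↑s ⊆ X} := by
  set C : Set (Finset ℕ) := {s | s ∈ B ∧ P s ∧ ↑s ⊆ X} with hC
  have hmem : ∀ W : Set ℕ, W ⊆ X → W.Infinite →
      sigB B W ∈ C ∧ (sigB B W).Nonempty ∧ InitSegSet (sigB B W) W := by
    intro W hWX hWi
    obtain ⟨h1, h2, h3⟩ := sigB_spec hB.1 (hWX.trans hXU) hWi
    exact ⟨⟨h1, hP W hWX hWi, h3.1.trans hWX⟩, h2, h3⟩
  constructor
  · constructor
    · apply infinite_of_unbounded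
      intro N
      obtain ⟨h1, h2, h3⟩ := hmem (X ∩ Set.Ioi N) Set.inter_subset_left
        (inter_Ioi_infinite hXi N)
      exact ⟨_, h1, h2, fun x hx => (h3.1 hx).2⟩
    · intro W hWC hWi
      have hWX : W ⊆ X := by
        refine hWC.trans ?_
        intro y hy
        simp only [unionOf, Set.mem_iUnion] at hy
        obtain ⟨t, ht, hyt⟩ := hy
        exact ht.2.2 hyt
      obtain ⟨h1, h2, h3⟩ := hmem W hWX hWi
      exact ⟨_, h1, h2, h3⟩
  · intro s hs t ht hsub
    exact hB.2 s hs.1 t ht.1 hsub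
-- Section D : stage 1 diagonalization
lemma stage1 (B B1 : Set (Finset ℕ)) {Y₀ : Set ℕ} (hY₀i : Y₀.Infinite) :
    ∃ X : Set ℕ, X ⊆ Y₀ ∧ X.Infinite ∧
      ∀ s : Finset ℕ, ↑s ⊆ X → s.Nonempty →
        (Accepts B B1 s (tailIn X s) ∨ Rejects B B1 s (tailIn X s)) := by
  have hstep : ∀ (P : Finset ℕ) (Y : Set ℕ), Y.Infinite →
      ∃ Y' : Set ℕ, Y' ⊆ Y ∧ Y'.Infinite ∧ (∀ y ∈ Y', sInf Y < y) ∧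
        ∀ s ∈ (insert (sInf Y) P).powerset, Accepts B B1 s Y' ∨ Rejects B B1 s Y' := by
    intro P Y hYi
    obtain ⟨Y', h1, h2, h3⟩ := exists_decideAll B B1 (insert (sInf Y) P).powerset
      (Y ∩ Set.Ioi (sInf Y)) (inter_Ioi_infinite hYi _)
    exact ⟨Y', h1.trans Set.inter_subset_left, h2, fun y hy => (h1 hy).2, h3⟩
  choose F hF1 hF2 hF3 hF4 using hstep
  let St : ℕ → {PY : Finset ℕ × Set ℕ // PY.2.Infinite} := fun n =>
    Nat.rec ⟨(∅, Y₀), hY₀i⟩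
      (fun _ p => ⟨(insert (sInf p.1.2) p.1.1, F p.1.1 p.1.2 p.2), hF2 p.1.1 p.1.2 p.2⟩) n
  set Pn : ℕ → Finset ℕ := fun n => (St n).1.1 with hPn
  set Yn : ℕ → Set ℕ := fun n => (St n).1.2 with hYn
  set xn : ℕ → ℕ := fun n => sInf (Yn n) with hxn
  have hYinf : ∀ n, (Yn n).Infinite := fun n => (St n).2
  have hy0 : Yn 0 = Y₀ := rfl
  have hPsucc : ∀ n, Pn (n + 1) = insert (xn n) (Pn n) := fun n => rfl
  have hYsub : ∀ n, Yn (n + 1) ⊆ Yn n := fun n => hF1 (Pn n) (Yn n) (St n).2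
  have hYgt : ∀ n, ∀ y ∈ Yn (n + 1), xn n < y := fun n => hF3 (Pn n) (Yn n) (St n).2
  have hYdec : ∀ n, ∀ s ∈ (insert (xn n) (Pn n)).powerset,
      Accepts B B1 s (Yn (n + 1)) ∨ Rejects B B1 s (Yn (n + 1)) :=
    fun n => hF4 (Pn n) (Yn n) (St n).2
  have hYmono : ∀ m n, m ≤ n → Yn n ⊆ Yn m := by
    intro m n hmn
    induction n with
    | zero => rw [Nat.le_zero.1 hmn]
    | succ k ih =>
      rcases Nat.lt_or_ge m (k + 1) with h | h
      · exact (hYsub k).trans (ih (by omega))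
      · rw [Nat.le_antisymm hmn h]
  have hxmem : ∀ n, xn n ∈ Yn n := fun n => Nat.sInf_mem (hYinf n).nonempty
  have hxlt : ∀ m n, m < n → xn m < xn n := by
    intro m n hmn
    exact hYgt m (xn n) (hYmono (m + 1) n hmn (hxmem n))
  have hxinj : Function.Injective xn := by
    intro a b hab
    by_contra h
    rcases Nat.lt_or_ge a b with h' | h'
    · exact absurd hab (Nat.ne_of_lt (hxlt a b h'))
    · exact absurd hab.symm (Nat.ne_of_lt (hxlt b a (by omega)))
  have hPmem : ∀ n k, k < n → xn k ∈ Pn n := by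
    intro n
    induction n with
    | zero => omega
    | succ j ih =>
      intro k hk
      rw [hPsucc j]
      rcases Nat.lt_or_ge k j with h | h
      · exact Finset.mem_insert_of_mem (ih k h)
      · have : k = j := by omega
        rw [this]; exact Finset.mem_insert_self _ _
  refine ⟨Set.range xn, ?_, Set.infinite_range_of_injective hxinj, ?_⟩
  · rintro y ⟨n, rfl⟩
    exact hYmono 0 n (Nat.zero_le n) (hxmem n)
  intro s hsX hsne
  set X := Set.range xn
  obtain ⟨m, hm⟩ : ∃ m, xn m = s.max' hsne := hsX (Finset.mem_coe.2 (s.max'_mem hsne))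
  have hsP : s ⊆ insert (xn m) (Pn m) := by
    intro a ha
    obtain ⟨k, hk⟩ : ∃ k, xn k = a := hsX ha
    have hle : xn k ≤ xn m := by rw [hk, hm]; exact s.le_max' a ha
    have hkm : k ≤ m := by
      by_contra h
      exact absurd hle (not_le.2 (hxlt m k (by omega)))
    rcases Nat.lt_or_ge k m with h | h
    · exact Finset.mem_insert_of_mem (hk ▸ hPmem m k h)
    · have : k = m := by omega
      rw [← hk, this]; exact Finset.mem_insert_self _ _
  have htail : tailIn X s ⊆ Yn (m + 1) := by
    rintro y ⟨⟨j, rfl⟩, hy⟩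
    have : xn m < xn j := by rw [hm]; exact hy _ (s.max'_mem hsne)
    have hmj : m < j := by
      by_contra h
      rcases Nat.eq_or_lt_of_le (not_lt.1 h) with h' | h'
      · subst h'; exact absurd this (lt_irrefl _)
      · exact absurd this (not_lt.2 (le_of_lt (hxlt j m h')))
    exact hYmono (m + 1) j hmj (hxmem j)
  rcases hYdec m s (Finset.mem_powerset.2 hsP) with h | h
  · exact Or.inl (accepts_mono htail h)
  · exact Or.inr (rejects_mono htail h)
-- Section E : stage 2 and the Nash-Williams partition lemma
lemma stage2 (B B1 : Set (Finset ℕ)) {X : Set ℕ} (hXi : X.Infinite)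
    (hrejE : Rejects B B1 ∅ X)
    (hdec : ∀ s : Finset ℕ, ↑s ⊆ X → s.Nonempty →
        (Accepts B B1 s (tailIn X s) ∨ Rejects B B1 s (tailIn X s))) :
    ∃ X' : Set ℕ, X' ⊆ X ∧ X'.Infinite ∧
      ∀ s : Finset ℕ, ↑s ⊆ X' → Rejects B B1 s (tailIn X s) := by
  -- the set of one-point extensions that get accepted is finite, for rejected s
  have hAfin : ∀ s : Finset ℕ, ↑s ⊆ X → Rejects B B1 s (tailIn X s) →
      {y ∈ tailIn X s | Accepts B B1 (insert y s) (tailIn X (insert y s))}.Finite := by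
    intro s hsX hrej
    by_contra hinf
    set A := {y ∈ tailIn X s | Accepts B B1 (insert y s) (tailIn X (insert y s))} with hA
    have hacc : Accepts B B1 s A := by
      intro Z hZA hZi hZgt
      set y₀ := sInf Z with hy₀def
      have hy₀Z : y₀ ∈ Z := Nat.sInf_mem hZi.nonempty
      have hy₀A : y₀ ∈ A := hZA hy₀Z
      set Z' := Z \ {y₀} with hZ'
      have hZ'i : Z'.Infinite := hZi.diff (Set.finite_singleton y₀)
      have hZ'gt : ∀ z ∈ Z', y₀ < z := by
        rintro z ⟨hz, hz2⟩
        have := Nat.sInf_le hz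
        simp only [Set.mem_singleton_iff] at hz2
        omega
      have hZ'sub : Z' ⊆ tailIn X (insert y₀ s) := by
        rintro z hz
        refine ⟨((hZA hz.1).1).1, fun a ha => ?_⟩
        rcases Finset.mem_insert.1 ha with rfl | ha'
        · exact hZ'gt z hz
        · exact hZgt z hz.1 a ha'
      have := hy₀A.2 Z' hZ'sub hZ'i (by
        intro z hz a ha
        rcases Finset.mem_insert.1 ha with rfl | ha'
        · exact hZ'gt z hz
        · exact hZgt z hz.1 a ha')
      have hset : (↑(insert y₀ s) : Set ℕ) ∪ Z' = ↑s ∪ Z := by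
        ext z
        simp only [Finset.coe_insert, Set.mem_union, Set.mem_insert_iff, hZ',
          Set.mem_diff, Set.mem_singleton_iff, Finset.mem_coe]
        constructor
        · rintro ((rfl | hz) | ⟨hz, _⟩)
          · exact Or.inr hy₀Z
          · exact Or.inl hz
          · exact Or.inr hz
        · rintro (hz | hz)
          · exact Or.inl (Or.inr hz)
          · by_cases h : z = y₀
            · exact Or.inl (Or.inl h)
            · exact Or.inr ⟨hz, h⟩
      rwa [hset] at this
    exact hrej A (fun y hy => hy.1) hinf hacc
  -- choose the next point
  have hstep : ∀ Q : Finset ℕ, ↑Q ⊆ X → (∀ s ⊆ Q, Rejects B B1 s (tailIn X s)) →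
      ∃ y, y ∈ tailIn X Q ∧ ∀ s ⊆ insert y Q, Rejects B B1 s (tailIn X s) := by
    intro Q hQX hQrej
    set E := ⋃ s ∈ (↑Q.powerset : Set (Finset ℕ)),
      {y ∈ tailIn X s | Accepts B B1 (insert y s) (tailIn X (insert y s))} with hE
    have hEfin : E.Finite := by
      apply Set.Finite.biUnion (Q.powerset.finite_toSet)
      intro s hs
      have hsQ : s ⊆ Q := Finset.mem_powerset.1 hs
      exact hAfin s ((Finset.coe_subset.2 hsQ).trans hQX) (hQrej s hsQ)
    obtain ⟨y, hy⟩ := ((tailIn_infinite hXi Q).diff hEfin).nonempty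
    refine ⟨y, hy.1, ?_⟩
    intro s hs
    by_cases hys : y ∈ s
    · set s₀ := s.erase y with hs₀
      have hs₀Q : s₀ ⊆ Q := by
        intro z hz
        obtain ⟨hzy, hzs⟩ := Finset.mem_erase.1 hz
        rcases Finset.mem_insert.1 (hs hzs) with rfl | h
        · exact absurd rfl hzy
        · exact h
      have hseq : s = insert y s₀ := (Finset.insert_erase hys).symm
      have hyA : y ∉ {y' ∈ tailIn X s₀ | Accepts B B1 (insert y' s₀)
          (tailIn X (insert y' s₀))} := by
        intro hmem
        exact hy.2 (Set.mem_biUnion (by simp [Finset.mem_powerset, hs₀Q]) hmem)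
      have hytail : y ∈ tailIn X s₀ := tailIn_anti hs₀Q hy.1
      have hnacc : ¬ Accepts B B1 (insert y s₀) (tailIn X (insert y s₀)) := by
        intro h
        exact hyA ⟨hytail, h⟩
      have hsubX : ↑(insert y s₀) ⊆ X := by
        intro z hz
        rcases Finset.mem_insert.1 (by exact_mod_cast hz) with rfl | h
        · exact hy.1.1
        · exact hQX (hs₀Q h)
      rcases hdec (insert y s₀) hsubX (Finset.insert_nonempty y s₀) with h | h
      · exact absurd h hnacc
      · rwa [hseq]
    · have hsQ : s ⊆ Q := by
        intro z hz
        rcases Finset.mem_insert.1 (hs hz) with rfl | h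
        · exact absurd hz hys
        · exact h
      exact hQrej s hsQ
  choose G hG1 hG2 using hstep
  have hrejE' : ∀ s ⊆ (∅ : Finset ℕ), Rejects B B1 s (tailIn X s) := by
    intro s hs
    rw [Finset.subset_empty.1 hs]
    exact rejects_mono (tailIn_subset X ∅) hrejE
  let St : ℕ → {Q : Finset ℕ // ↑Q ⊆ X ∧ ∀ s ⊆ Q, Rejects B B1 s (tailIn X s)} := fun n =>
    Nat.rec ⟨∅, by simp, hrejE'⟩
      (fun _ p => ⟨insert (G p.1 p.2.1 p.2.2) p.1, by
          intro z hz
          rcases Finset.mem_insert.1 (by exact_mod_cast hz) with rfl | h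
          · exact (hG1 p.1 p.2.1 p.2.2).1
          · exact p.2.1 h,
        hG2 p.1 p.2.1 p.2.2⟩) n
  set Qn : ℕ → Finset ℕ := fun n => (St n).1 with hQn
  have hQsub : ∀ n, ↑(Qn n) ⊆ X := fun n => (St n).2.1
  have hQrej : ∀ n, ∀ s ⊆ Qn n, Rejects B B1 s (tailIn X s) := fun n => (St n).2.2
  have hQsucc : ∀ n, Qn (n + 1) = insert (G (Qn n) (St n).2.1 (St n).2.2) (Qn n) :=
    fun n => rfl
  have hGmem : ∀ n, G (Qn n) (St n).2.1 (St n).2.2 ∈ tailIn X (Qn n) :=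
    fun n => hG1 (Qn n) (St n).2.1 (St n).2.2
  have hGnot : ∀ n, G (Qn n) (St n).2.1 (St n).2.2 ∉ Qn n := by
    intro n h
    exact absurd ((hGmem n).2 _ h) (lt_irrefl _)
  have hQmono : ∀ m n, m ≤ n → Qn m ⊆ Qn n := by
    intro m n hmn
    induction n with
    | zero => rw [Nat.le_zero.1 hmn]
    | succ k ih =>
      rcases Nat.lt_or_ge m (k + 1) with h | h
      · rw [hQsucc k]
        exact (ih (by omega)).trans (Finset.subset_insert _ _)
      · rw [Nat.le_antisymm hmn h]
  have hQcard : ∀ n, (Qn n).card = n := by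
    intro n
    induction n with
    | zero => rfl
    | succ k ih =>
      rw [hQsucc k, Finset.card_insert_of_notMem (hGnot k), ih]
  refine ⟨⋃ n, ↑(Qn n), ?_, ?_, ?_⟩
  · exact Set.iUnion_subset fun n => hQsub n
  · intro hfin
    have hsub : Qn (hfin.toFinset.card + 1) ⊆ hfin.toFinset := by
      intro z hz
      exact hfin.mem_toFinset.2 (Set.mem_iUnion.2 ⟨hfin.toFinset.card + 1, Finset.mem_coe.2 hz⟩)
    have h1 := Finset.card_le_card hsub
    have h2 := hQcard (hfin.toFinset.card + 1)
    omega
  · have hfind : ∀ s : Finset ℕ, ↑s ⊆ (⋃ n, (↑(Qn n) : Set ℕ)) → ∃ N, s ⊆ Qn N := by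
      intro s
      induction s using Finset.induction_on with
      | empty => exact fun _ => ⟨0, Finset.empty_subset _⟩
      | insert _ _ hnm ih =>
        rename_i a s
        intro hs
        obtain ⟨N1, hN1⟩ := ih (fun z hz => hs
          (Finset.mem_coe.2 (Finset.mem_insert_of_mem (Finset.mem_coe.1 hz))))
        obtain ⟨N2, hN2⟩ := Set.mem_iUnion.1 (hs
          (Finset.mem_coe.2 (Finset.mem_insert_self a s)))
        refine ⟨max N1 N2, ?_⟩
        intro z hz
        rcases Finset.mem_insert.1 hz with rfl | h
        · exact hQmono N2 _ (le_max_right _ _) (Finset.mem_coe.1 hN2)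
        · exact hQmono N1 _ (le_max_left _ _) (hN1 h)
    intro s hs
    obtain ⟨N, hN⟩ := hfind s hs
    exact hQrej N s hN

lemma nash_williams {B : Set (Finset ℕ)} (hB : IsBarrier B) (B1 : Set (Finset ℕ)) :
    ∃ C : Set (Finset ℕ), IsBarrier C ∧ C ⊆ B ∧
      ((∀ s ∈ C, s ∈ B1) ∨ (∀ s ∈ C, s ∉ B1)) := by
  have hUi : (unionOf B).Infinite := unionOf_infinite hB
  obtain ⟨Y₀, hY₀U, hY₀i, hY₀d⟩ := exists_decide B B1 ∅ (unionOf B) hUi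
  rcases hY₀d with hacc | hrej
  · -- accepting case : B1 contains a barrier
    refine ⟨{s | s ∈ B ∧ s ∈ B1 ∧ ↑s ⊆ Y₀}, ?_, fun s hs => hs.1, Or.inl fun s hs => hs.2.1⟩
    apply barrier_restrict hB hY₀U hY₀i
    intro W hWY hWi
    have := hacc W hWY hWi (by simp)
    rwa [show ((∅ : Finset ℕ) : Set ℕ) ∪ W = W by simp] at this
  · -- rejecting case
    obtain ⟨X, hXY, hXi, hXdec⟩ := stage1 B B1 hY₀i
    have hXU : X ⊆ unionOf B := hXY.trans hY₀U
    obtain ⟨X', hX'X, hX'i, hX'rej⟩ := stage2 B B1 hXi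
      (rejects_mono hXY hrej) hXdec
    refine ⟨{s | s ∈ B ∧ s ∉ B1 ∧ ↑s ⊆ X'}, ?_, fun s hs => hs.1, Or.inr fun s hs => hs.2.1⟩
    apply barrier_restrict hB (hX'X.trans hXU) hX'i
    intro W hWX' hWi
    obtain ⟨h1, h2, h3⟩ := sigB_spec hB.1 ((hWX'.trans hX'X).trans hXU) hWi
    intro hmem
    have hsub : ↑(sigB B W) ⊆ X' := h3.1.trans hWX'
    have hrej' := hX'rej (sigB B W) hsub
    have hax : Accepts B B1 (sigB B W) (tailIn X (sigB B W)) :=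
      accepts_of_mem hB h1 hmem ((tailIn_subset _ _).trans hXU)
    exact hrej' (tailIn X (sigB B W)) Set.Subset.rfl
      (tailIn_infinite hXi _) hax
-- Section F : barrier maps into finitely many rows of ℕ are good
lemma bounded_rows : ∀ (k : ℕ) (B : Set (Finset ℕ)), IsBarrier B →
    ∀ g : Finset ℕ → ℕ × ℕ, (∀ s ∈ B, (g s).1 < k) →
    ∃ s ∈ B, ∃ t ∈ B, Tri s t ∧ (g s).1 = (g t).1 ∧ (g s).2 ≤ (g t).2 := by
  intro k
  induction k with
  | zero =>
    intro B hB g hg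
    obtain ⟨s, hs⟩ := hB.1.1.nonempty
    exact absurd (hg s hs) (by omega)
  | succ k ih =>
    intro B hB g hg
    obtain ⟨C, hC, hCB, hCcase⟩ := nash_williams hB {s | (g s).1 = k}
    rcases hCcase with hall | hnone
    · obtain ⟨sq, hsq1, hsq2⟩ := barrier_descent hC
      by_contra hcon
      push_neg at hcon
      have hdec : ∀ n, (g (sq (n + 1))).2 < (g (sq n)).2 := by
        intro n
        have h1 : (g (sq n)).1 = k := hall _ (hsq1 n)
        have h2 : (g (sq (n + 1))).1 = k := hall _ (hsq1 (n + 1))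
        have h3 := hcon (sq n) (hCB (hsq1 n)) (sq (n + 1)) (hCB (hsq1 (n + 1)))
          (hsq2 n) (h1.trans h2.symm)
        omega
      have hmono : ∀ n, (g (sq n)).2 + n ≤ (g (sq 0)).2 := by
        intro n
        induction n with
        | zero => omega
        | succ j ihj => have := hdec j; omega
      have := hmono ((g (sq 0)).2 + 1)
      omega
    · obtain ⟨s, hs, t, ht, h1, h2, h3⟩ := ih C hC g (fun s hsC => by
        have ha := hg s (hCB hsC)
        have hb := hnone s hsC
        simp only [Set.mem_setOf_eq] at hb
        omega)
      exact ⟨s, hCB hs, t, hCB ht, h1, h2, h3⟩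

-- Section G : Rado poset lemmas
lemma rado_eq {p q : Rado} (h1 : p.1.1 = q.1.1) (h2 : p.1.2 = q.1.2) : p = q := by
  apply Subtype.ext
  exact Prod.ext h1 h2

lemma rado_antichain_injOn {A : Set Rado} (hA : IsAntichain radoLE A) :
    Set.InjOn (fun a : Rado => a.1.1) A := by
  intro a ha b hb hab
  by_contra hne
  rcases le_total a.1.2 b.1.2 with h | h
  · exact hA ha hb hne (Or.inl ⟨hab, h⟩)
  · exact hA hb ha (Ne.symm hne) (Or.inl ⟨hab.symm, h⟩)

lemma rado_antichain_finite {A : Set Rado} (hA : IsAntichain radoLE A) : A.Finite := by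
  rcases A.eq_empty_or_nonempty with rfl | ⟨x, hx⟩
  · exact Set.finite_empty
  · have hmap : ∀ a ∈ A, a.1.1 ≤ x.1.2 := by
      intro a ha
      by_contra hlt
      push_neg at hlt
      have hxa := x.2
      have haa := a.2
      have hne : x ≠ a := fun heq => by rw [heq] at hxa hlt; omega
      exact hA hx ha hne (Or.inr hlt)
    apply Set.Finite.of_finite_image ((Set.finite_Iic x.1.2).subset ?_)
      (rado_antichain_injOn hA)
    rintro n ⟨a, ha, rfl⟩
    exact hmap a ha

lemma rado_max_fill {A : Set Rado} (hA : IsMaxAntichainRel radoLE A)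
    {c : ℕ} (hc : ∀ a ∈ A, a.1.1 ≠ c) : ∃ a ∈ A, a.1.1 < c ∧ a.1.2 < c := by
  have hfin : A.Finite := rado_antichain_finite hA.1
  by_contra h
  push_neg at h
  set d := c + 1 + hfin.toFinset.sup (fun a : Rado => a.1.1) with hd
  have hcd : c < d := by omega
  set v : Rado := ⟨(c, d), hcd⟩ with hv
  have hvA : v ∉ A := fun hmem => hc v hmem rfl
  have hanti : IsAntichain radoLE (insert v A) := by
    intro p hp q hq hne hle
    rcases Set.mem_insert_iff.1 hp with rfl | hp'
    · rcases Set.mem_insert_iff.1 hq with rfl | hq'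
      · exact hne rfl
      · rcases hle with ⟨h1, h2⟩ | h1
        · exact hc q hq' h1.symm
        · have hq2 : q.1.1 ≤ hfin.toFinset.sup (fun a : Rado => a.1.1) :=
            Finset.le_sup (f := fun a : Rado => a.1.1) (hfin.mem_toFinset.2 hq')
          have hvd : v.1.2 = d := rfl
          omega
    · rcases Set.mem_insert_iff.1 hq with rfl | hq'
      · rcases hle with ⟨h1, h2⟩ | h1
        · exact hc p hp' h1
        · have hp2 := p.2
          have hvc : v.1.1 = c := rfl
          have := h p hp' (by omega)
          omega
      · exact hA.1 hp' hq' hne hle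
  have heq := hA.2 (insert v A) hanti (Set.subset_insert v A)
  have hv' : v ∈ insert v A := Set.mem_insert v A
  rw [← heq] at hv'
  exact hvA hv'

lemma rado_mem_bound {A : Set Rado} (hA : IsMaxAntichainRel radoLE A) {m : ℕ}
    (hcard : A.ncard = m) {x : Rado} (hx : x ∈ A) : x.1.1 < m := by
  have hfin : A.Finite := rado_antichain_finite hA.1
  by_contra hge
  push_neg at hge
  set F := hfin.toFinset.image (fun a : Rado => a.1.1) with hF
  have hFcard : F.card = m := by
    rw [hF, Finset.card_image_of_injOn (by
      rw [Set.Finite.coe_toFinset]; exact rado_antichain_injOn hA.1)]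
    rw [← Set.ncard_eq_toFinset_card A hfin, hcard]
  have hex : ∃ c, c ≤ x.1.1 ∧ c ∉ F := by
    by_contra hno
    push_neg at hno
    have hsub : Finset.range (x.1.1 + 1) ⊆ F := by
      intro c hcmem
      have := Finset.mem_range.1 hcmem
      exact hno c (by omega)
    have := Finset.card_le_card hsub
    rw [Finset.card_range, hFcard] at this
    omega
  obtain ⟨c, hcle, hcF⟩ := hex
  have hcne : ∀ a ∈ A, a.1.1 ≠ c := by
    intro a ha heq
    exact hcF (Finset.mem_image.2 ⟨a, hfin.mem_toFinset.2 ha, heq⟩)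
  have hclt : c < x.1.1 := by
    have := hcne x hx
    omega
  obtain ⟨a, ha, h1, h2⟩ := rado_max_fill hA hcne
  have hne : a ≠ x := fun heq => by rw [heq] at h1; omega
  exact hA.1 ha hx hne (Or.inr (by omega))
-- Section H : the embedding of R into AM(R)
def gSet (x : Rado) : Set Rado :=
  {y : Rado | (y.1.1 ≤ x.1.1 ∧ y.1.2 = x.1.1 + 1) ∨ (y.1.1 = x.1.1 + 1 ∧ y.1.2 = x.1.2 + 2)}

lemma gSet_max (x : Rado) : IsMaxAntichainRel radoLE (gSet x) := by
  have hx2 := x.2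
  constructor
  · intro p hp q hq hne hle
    simp only [gSet, Set.mem_setOf_eq] at hp hq
    rcases hp with ⟨h1, h2⟩ | ⟨h1, h2⟩ <;> rcases hq with ⟨h3, h4⟩ | ⟨h3, h4⟩ <;>
      rcases hle with ⟨h5, h6⟩ | h5
    · exact hne (rado_eq h5 (by omega))
    · omega
    · omega
    · omega
    · omega
    · omega
    · exact hne (rado_eq (by omega) (by omega))
    · omega
  · intro B' hB' hsub
    apply Set.Subset.antisymm hsub
    intro v hv
    show v ∈ gSet x
    rcases Nat.lt_or_ge x.1.1 v.1.1 with hc | hc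
    · rcases Nat.lt_or_ge (x.1.1 + 1) v.1.1 with hc2 | hc2
      · -- v.1.1 > x.1.1+1 : impossible
        exfalso
        set w : Rado := ⟨(x.1.1, x.1.1 + 1), by omega⟩ with hw
        have hwg : w ∈ gSet x := Or.inl ⟨le_refl _, rfl⟩
        have hne : w ≠ v := by
          intro h
          have : w.1.1 = v.1.1 := by rw [h]
          have hw1 : w.1.1 = x.1.1 := rfl
          omega
        exact hB' (hsub hwg) hv hne (Or.inr (by
          have : w.1.2 = x.1.1 + 1 := rfl
          omega))
      · -- v.1.1 = x.1.1 + 1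
        have hc3 : v.1.1 = x.1.1 + 1 := by omega
        set w : Rado := ⟨(x.1.1 + 1, x.1.2 + 2), by omega⟩ with hw
        have hwg : w ∈ gSet x := Or.inr ⟨rfl, rfl⟩
        by_cases hvw : v = w
        · rw [hvw]; exact hwg
        · exfalso
          have hw1 : w.1.1 = x.1.1 + 1 := rfl
          rcases le_total v.1.2 w.1.2 with h | h
          · exact hB' hv (hsub hwg) hvw (Or.inl ⟨by omega, h⟩)
          · exact hB' (hsub hwg) hv (Ne.symm hvw) (Or.inl ⟨by omega, h⟩)
    · -- v.1.1 ≤ x.1.1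
      set w : Rado := ⟨(v.1.1, x.1.1 + 1), by omega⟩ with hw
      have hwg : w ∈ gSet x := Or.inl ⟨hc, rfl⟩
      by_cases hvw : v = w
      · rw [hvw]; exact hwg
      · exfalso
        have hw1 : w.1.1 = v.1.1 := rfl
        rcases le_total v.1.2 w.1.2 with h | h
        · exact hB' hv (hsub hwg) hvw (Or.inl ⟨by omega, h⟩)
        · exact hB' (hsub hwg) hv (Ne.symm hvw) (Or.inl ⟨by omega, h⟩)

lemma gSet_dom_iff (x y : Rado) : radoLE x y ↔ DomRel radoLE (gSet x) (gSet y) := by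
  have hx2 := x.2
  have hy2 := y.2
  constructor
  · intro hxy u hu
    simp only [gSet, Set.mem_setOf_eq] at hu
    rcases hxy with ⟨h1, h2⟩ | h1
    · rcases hu with ⟨h3, h4⟩ | ⟨h3, h4⟩
      · exact ⟨u, Or.inl ⟨by omega, by omega⟩, Or.inl ⟨rfl, le_refl _⟩⟩
      · set w : Rado := ⟨(y.1.1 + 1, y.1.2 + 2), by omega⟩ with hwdef
        have hw1 : w.1.1 = y.1.1 + 1 := rfl
        have hw2 : w.1.2 = y.1.2 + 2 := rfl
        exact ⟨w, Or.inr ⟨hw1, hw2⟩, Or.inl ⟨by omega, by omega⟩⟩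
    · rcases hu with ⟨h3, h4⟩ | ⟨h3, h4⟩
      · set w : Rado := ⟨(y.1.1, y.1.1 + 1), by omega⟩ with hwdef
        have hw1 : w.1.1 = y.1.1 := rfl
        have hw2 : w.1.2 = y.1.1 + 1 := rfl
        exact ⟨w, Or.inl ⟨by omega, hw2⟩, Or.inr (by omega)⟩
      · set w : Rado := ⟨(x.1.1 + 1, y.1.1 + 1), by omega⟩ with hwdef
        have hw1 : w.1.1 = x.1.1 + 1 := rfl
        have hw2 : w.1.2 = y.1.1 + 1 := rfl
        exact ⟨w, Or.inl ⟨by omega, hw2⟩, Or.inl ⟨by omega, by omega⟩⟩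
  · intro hdom
    obtain ⟨w, hw, hle⟩ := hdom ⟨(x.1.1 + 1, x.1.2 + 2), by omega⟩ (Or.inr ⟨rfl, rfl⟩)
    simp only [gSet, Set.mem_setOf_eq] at hw
    rcases hw with ⟨h3, h4⟩ | ⟨h3, h4⟩ <;> rcases hle with ⟨h5, h6⟩ | h5
    · replace h5 : x.1.1 + 1 = w.1.1 := h5
      replace h6 : x.1.2 + 2 ≤ w.1.2 := h6
      exact Or.inr (by omega)
    · replace h5 : x.1.2 + 2 < w.1.1 := h5
      exact Or.inr (by omega)
    · replace h5 : x.1.1 + 1 = w.1.1 := h5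
      replace h6 : x.1.2 + 2 ≤ w.1.2 := h6
      exact Or.inl ⟨by omega, by omega⟩
    · replace h5 : x.1.2 + 2 < w.1.1 := h5
      exact Or.inr (by omega)

/-- (a) For every integer `m`, the set `⋃AM_m(R)` of elements of Rado's poset `R`
belonging to some `m`-element maximal antichain, with the induced order, is bqo;
(b) `R` order-embeds into `AM(R)`, the maximal antichains of `R` ordered by domination. -/
theorem stmt19 :
    (∀ m : ℕ, IsBqo (fun x y : {x : Rado //
        ∃ A : Set Rado, IsMaxAntichainRel radoLE A ∧ A.ncard = m ∧ x ∈ A} =>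
      radoLE x.1 y.1)) ∧
    ∃ g : Rado → {A : Set Rado // IsMaxAntichainRel radoLE A},
      ∀ x y : Rado, radoLE x y ↔ DomRel radoLE (g x).1 (g y).1 := by
  constructor
  · intro m B hB f
    have hbound : ∀ s : Finset ℕ, ((f s).1.1.1) < m := by
      intro s
      obtain ⟨A, hA, hcard, hmem⟩ := (f s).2
      exact rado_mem_bound hA hcard hmem
    obtain ⟨s, hs, t, ht, htri, h1, h2⟩ := bounded_rows m B hB
      (fun s => ((f s).1.1.1, (f s).1.1.2)) (fun s _ => hbound s)
    exact ⟨s, hs, t, ht, htri, Or.inl ⟨h1, h2⟩⟩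
  · exact ⟨fun x => ⟨gSet x, gSet_max x⟩, gSet_dom_iff⟩
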